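/- Let d ≥ 1 and let X be the cross-polytope point set on Ω^d consisting of the 4d points ±e_j and ±i·e_j for j = 1, …, d, where e_j is the j-th standard basis vector of ℂ^d. Then the separation distance of X equals π/2, the covering radius of X equals arccos(1/√(2d)), and hence the mesh ratio of X equals (4/π)·arccos(1/√(2d)). -/

import Mathlib

noncomputable section
open MeasureTheory Metric MvPolynomial ENNReal

instance (d : ℕ) : MeasurableSpace (EuclideanSpace ℂ (Fin d)) := borel _
instance (d : ℕ) : BorelSpace (EuclideanSpace ℂ (Fin d)) := ⟨rfl⟩

/-- The complex unit sphere `Ω^d ⊆ ℂ^d`. -/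
abbrev CSph (d : ℕ) : Type := Metric.sphere (0 : EuclideanSpace ℂ (Fin d)) 1

instance (d : ℕ) : DecidableEq (CSph d) := Classical.decEq _

/-- The Hermitian inner product `⟨u,v⟩ = ∑ u_j conj (v_j)` on `ℂ^d`. -/
def hInnerC {d : ℕ} (u v : EuclideanSpace ℂ (Fin d)) : ℂ :=
  ∑ j, u j * (starRingEnd ℂ) (v j)

/-- geodesic distance on the complex sphere -/
def distC {d : ℕ} (u v : CSph d) : ℝ :=
  Real.arccos (hInnerC (u : EuclideanSpace ℂ (Fin d)) (v : EuclideanSpace ℂ (Fin d))).re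

/-- separation distance: minimal distance between distinct points of `X` -/
def sepD {α : Type*} (dst : α → α → ℝ) (X : Finset α) : ℝ :=
  sInf {r : ℝ | ∃ x ∈ X, ∃ y ∈ X, x ≠ y ∧ r = dst x y}

/-- covering radius: max over points of the sphere of the distance to `X` -/
def covD {α : Type*} (dst : α → α → ℝ) (X : Finset α) : ℝ :=
  sSup {r : ℝ | ∃ y : α, r = sInf {s : ℝ | ∃ x ∈ X, s = dst y x}}

/-- mesh ratio `ρ = 2h/δ` -/
def meshD {α : Type*} (dst : α → α → ℝ) (X : Finset α) : ℝ :=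
  2 * covD dst X / sepD dst X

/-- the cross-polytope points `±e_j, ±i·e_j` on `Ω^d` -/
def crossPt (d : ℕ) (j : Fin d) (k : Fin 4) : CSph d :=
  ⟨(![1, -1, Complex.I, -Complex.I] k) • EuclideanSpace.single j (1 : ℂ), by
    simp only [mem_sphere_iff_norm, sub_zero, norm_smul, EuclideanSpace.norm_single]
    fin_cases k <;> simp⟩

lemma hInner_cross {d : ℕ} (y : EuclideanSpace ℂ (Fin d)) (j : Fin d) (k : Fin 4) :
    hInnerC y ((crossPt d j k : CSph d) : EuclideanSpace ℂ (Fin d)) =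
      y j * (starRingEnd ℂ) (![1, -1, Complex.I, -Complex.I] k) := by
  unfold hInnerC crossPt
  simp only [PiLp.smul_apply, EuclideanSpace.single_apply, smul_eq_mul, map_mul]
  rw [Finset.sum_eq_single j] <;> simp +contextual [mul_comm]
lemma re_hInner_cross {d : ℕ} (y : EuclideanSpace ℂ (Fin d)) (j : Fin d) (k : Fin 4) :
    (hInnerC y ((crossPt d j k : CSph d) : EuclideanSpace ℂ (Fin d))).re =
      ![(y j).re, -(y j).re, (y j).im, -(y j).im] k := by
  rw [hInner_cross]
  fin_cases k <;> simp [Complex.mul_re, Complex.I_re, Complex.I_im]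
lemma crossPt_apply {d : ℕ} (j i : Fin d) (k : Fin 4) :
    ((crossPt d j k : CSph d) : EuclideanSpace ℂ (Fin d)) i =
      if i = j then ![1, -1, Complex.I, -Complex.I] k else 0 := by
  show (_ • EuclideanSpace.single j (1:ℂ)) i = _
  simp [EuclideanSpace.single_apply]
lemma crossPt_inner {d : ℕ} (j j' : Fin d) (k k' : Fin 4) (h : (j, k) ≠ (j', k')) :
    (hInnerC ((crossPt d j k : CSph d) : EuclideanSpace ℂ (Fin d))
      ((crossPt d j' k' : CSph d) : EuclideanSpace ℂ (Fin d))).re = 0 ∨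
    (hInnerC ((crossPt d j k : CSph d) : EuclideanSpace ℂ (Fin d))
      ((crossPt d j' k' : CSph d) : EuclideanSpace ℂ (Fin d))).re = -1 := by
  rw [re_hInner_cross]
  by_cases hj : j = j'
  · subst hj
    have hk : k ≠ k' := by simpa using h
    have hv := crossPt_apply j j k
    simp only [if_pos rfl] at hv
    fin_cases k <;> fin_cases k' <;> simp_all
  · have h0 : ((crossPt d j k : CSph d) : EuclideanSpace ℂ (Fin d)) j' = 0 := by
      rw [crossPt_apply]; simp [Ne.symm hj]
    left
    fin_cases k' <;> simp [h0]

lemma sep_eq (d : ℕ) (hd : 1 ≤ d) :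
    sepD distC (Finset.image (fun p : Fin d × Fin 4 => crossPt d p.1 p.2) Finset.univ) =
      Real.pi / 2 := by
  set X := Finset.image (fun p : Fin d × Fin 4 => crossPt d p.1 p.2) Finset.univ with hX
  have j0 : Fin d := ⟨0, hd⟩
  have memX : ∀ j k, crossPt d j k ∈ X := by
    intro j k
    rw [hX]
    exact Finset.mem_image.mpr ⟨(j, k), Finset.mem_univ _, rfl⟩
  have hne : crossPt d j0 0 ≠ crossPt d j0 2 := by
    intro h
    have := congrArg (fun z : CSph d => ((z : EuclideanSpace ℂ (Fin d)) j0)) h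
    simp only [crossPt_apply, if_pos rfl] at this
    simp [Complex.ext_iff] at this
  have hmem : Real.pi / 2 ∈
      {r : ℝ | ∃ x ∈ X, ∃ y ∈ X, x ≠ y ∧ r = distC x y} := by
    refine ⟨crossPt d j0 0, memX _ _, crossPt d j0 2, memX _ _, hne, ?_⟩
    unfold distC
    rw [re_hInner_cross]
    have hv := crossPt_apply j0 j0 (0 : Fin 4)
    simp only [if_pos rfl] at hv
    simp [hv, Real.arccos_zero]
  apply le_antisymm
  · exact csInf_le ⟨0, fun r hr => by
      obtain ⟨x, -, y, -, -, rfl⟩ := hr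
      exact Real.arccos_nonneg _⟩ hmem
  · refine le_csInf ⟨_, hmem⟩ ?_
    rintro r ⟨x, hx, y, hy, hxy, rfl⟩
    rw [hX] at hx hy
    obtain ⟨⟨j, k⟩, -, rfl⟩ := Finset.mem_image.mp hx
    obtain ⟨⟨j', k'⟩, -, rfl⟩ := Finset.mem_image.mp hy
    have hpq : ((j, k) : Fin d × Fin 4) ≠ (j', k') := fun h => hxy (by rw [h])
    unfold distC
    rcases crossPt_inner j j' k k' hpq with h | h <;> rw [h]
    · rw [Real.arccos_zero]
    · rw [Real.arccos_neg_one]; linarith [Real.pi_pos]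

lemma sum_norm_sq_eq_one {d : ℕ} (y : CSph d) :
    ∑ i, ‖(y : EuclideanSpace ℂ (Fin d)) i‖ ^ 2 = 1 := by
  have hy : ‖(y : EuclideanSpace ℂ (Fin d))‖ = 1 := by
    have := y.2
    simpa [mem_sphere_iff_norm] using this
  rw [EuclideanSpace.norm_eq] at hy
  have h0 : (0:ℝ) ≤ ∑ i, ‖(y : EuclideanSpace ℂ (Fin d)) i‖ ^ 2 :=
    Finset.sum_nonneg fun i _ => sq_nonneg _
  nlinarith [Real.sq_sqrt h0]

lemma norm_sq_complex (z : ℂ) : ‖z‖ ^ 2 = z.re ^ 2 + z.im ^ 2 := by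
  rw [Complex.sq_norm, Complex.normSq_apply]; ring

lemma arccos_anti {x y : ℝ} (h : x ≤ y) : Real.arccos y ≤ Real.arccos x := by
  rw [Real.arccos, Real.arccos]
  linarith [Real.monotone_arcsin h]

lemma inf_le_alpha {d : ℕ} (hd : 1 ≤ d) (y : CSph d) :
    sInf {s : ℝ | ∃ x ∈ Finset.image (fun p : Fin d × Fin 4 => crossPt d p.1 p.2)
        Finset.univ, s = distC y x} ≤ Real.arccos (1 / Real.sqrt (2 * (d : ℝ))) := by
  have hd0 : (0:ℝ) < d := by exact_mod_cast hd
  -- find a big coordinate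
  have hsum := sum_norm_sq_eq_one y
  have hne : (Finset.univ : Finset (Fin d)).Nonempty := ⟨⟨0, hd⟩, Finset.mem_univ _⟩
  obtain ⟨j, -, hj⟩ : ∃ j ∈ Finset.univ, (1:ℝ)/d ≤ ‖(y : EuclideanSpace ℂ (Fin d)) j‖ ^ 2 := by
    apply Finset.exists_le_of_sum_le hne
    rw [hsum]
    simp only [Finset.sum_const, Finset.card_univ, Fintype.card_fin, nsmul_eq_mul, one_div]
    rw [mul_inv_cancel₀ (ne_of_gt hd0)]
  set a := ((y : EuclideanSpace ℂ (Fin d)) j).re with ha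
  set b := ((y : EuclideanSpace ℂ (Fin d)) j).im with hb
  have hab : (1:ℝ)/d ≤ a ^ 2 + b ^ 2 := by rwa [norm_sq_complex] at hj
  set m := max |a| |b| with hm
  have hm0 : 0 ≤ m := le_trans (abs_nonneg a) (le_max_left _ _)
  have hmsq : 1 / (2 * (d:ℝ)) ≤ m ^ 2 := by
    have h1 : |a| ≤ m := le_max_left _ _
    have h2 : |b| ≤ m := le_max_right _ _
    have ha2 : a ^ 2 ≤ m ^ 2 := by
      rw [← sq_abs a]; exact pow_le_pow_left₀ (abs_nonneg a) h1 2
    have hb2 : b ^ 2 ≤ m ^ 2 := by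
      rw [← sq_abs b]; exact pow_le_pow_left₀ (abs_nonneg b) h2 2
    have h5 : 1 / (d:ℝ) ≤ 2 * m ^ 2 := le_trans hab (by linarith)
    rw [div_le_iff₀ hd0] at h5
    rw [div_le_iff₀ (by positivity : (0:ℝ) < 2 * d)]
    nlinarith [h5]
  have hcm : 1 / Real.sqrt (2 * (d:ℝ)) ≤ m := by
    rw [one_div, ← Real.sqrt_inv, ← one_div]
    calc Real.sqrt (1 / (2 * (d:ℝ))) ≤ Real.sqrt (m ^ 2) := Real.sqrt_le_sqrt hmsq
    _ = m := by rw [Real.sqrt_sq hm0]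
  have hk : ∃ k : Fin 4, ![a, -a, b, -b] k = m := by
    rcases max_choice |a| |b| with h | h <;> rw [hm, h]
    · rcases abs_choice a with h' | h'
      · exact ⟨0, by simpa using h'.symm⟩
      · exact ⟨1, by simpa using h'.symm⟩
    · rcases abs_choice b with h' | h'
      · exact ⟨2, by simpa using h'.symm⟩
      · exact ⟨3, by simpa using h'.symm⟩
  obtain ⟨k, hkm⟩ := hk
  have hdist : distC y (crossPt d j k) = Real.arccos m := by
    unfold distC
    rw [re_hInner_cross, ← hkm]
  apply csInf_le_of_le
  · exact ⟨0, fun s hs => by obtain ⟨x, -, rfl⟩ := hs; exact Real.arccos_nonneg _⟩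
  · exact ⟨crossPt d j k, Finset.mem_image.mpr ⟨(j, k), Finset.mem_univ _, rfl⟩, rfl⟩
  · rw [hdist]
    exact arccos_anti hcm

def yStar (d : ℕ) (hd : 1 ≤ d) : CSph d :=
  ⟨(WithLp.toLp 2 (fun _ : Fin d => (⟨(Real.sqrt (2 * d))⁻¹, (Real.sqrt (2 * d))⁻¹⟩ : ℂ)) :
      EuclideanSpace ℂ (Fin d)), by
    have hd0 : (0:ℝ) < d := by exact_mod_cast hd
    have h2d : (0:ℝ) < 2 * d := by linarith
    rw [mem_sphere_iff_norm, sub_zero, EuclideanSpace.norm_eq]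
    have hz : ∀ i : Fin d,
        ‖(⟨(Real.sqrt (2 * d))⁻¹, (Real.sqrt (2 * d))⁻¹⟩ : ℂ)‖ ^ 2 = ((d:ℝ))⁻¹ := by
      intro i
      rw [norm_sq_complex]
      show ((Real.sqrt (2 * (d:ℝ)))⁻¹) ^ 2 + ((Real.sqrt (2 * (d:ℝ)))⁻¹) ^ 2 = ((d:ℝ))⁻¹
      rw [inv_pow, Real.sq_sqrt h2d.le]
      field_simp
      norm_num
    simp only [WithLp.ofLp_toLp]
    rw [Finset.sum_congr rfl fun i _ => hz i]
    simp only [Finset.sum_const, Finset.card_univ, Fintype.card_fin, nsmul_eq_mul]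
    rw [mul_inv_cancel₀ (ne_of_gt hd0), Real.sqrt_one]⟩

lemma yStar_coord (d : ℕ) (hd : 1 ≤ d) (i : Fin d) :
    ((yStar d hd : CSph d) : EuclideanSpace ℂ (Fin d)) i =
      ⟨(Real.sqrt (2 * d))⁻¹, (Real.sqrt (2 * d))⁻¹⟩ := rfl

lemma inf_yStar (d : ℕ) (hd : 1 ≤ d) :
    sInf {s : ℝ | ∃ x ∈ Finset.image (fun p : Fin d × Fin 4 => crossPt d p.1 p.2)
        Finset.univ, s = distC (yStar d hd) x} =
      Real.arccos (1 / Real.sqrt (2 * (d : ℝ))) := by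
  have hd0 : (0:ℝ) < d := by exact_mod_cast hd
  have h2d : (0:ℝ) < 2 * d := by linarith
  set c := (Real.sqrt (2 * (d:ℝ)))⁻¹ with hc
  have hc0 : 0 ≤ c := by positivity
  have hall : ∀ j k, distC (yStar d hd) (crossPt d j k) = Real.arccos (![c, -c, c, -c] k) := by
    intro j k
    unfold distC
    rw [re_hInner_cross]
    congr 1
  have h1c : 1 / Real.sqrt (2 * (d:ℝ)) = c := (one_div _)
  apply le_antisymm
  · apply csInf_le ⟨0, fun s hs => by obtain ⟨x, -, rfl⟩ := hs; exact Real.arccos_nonneg _⟩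
    refine ⟨crossPt d ⟨0, hd⟩ 0, Finset.mem_image.mpr ⟨(⟨0, hd⟩, 0), Finset.mem_univ _, rfl⟩, ?_⟩
    rw [hall, h1c, Matrix.cons_val_zero]
  · apply le_csInf
    · exact ⟨_, ⟨crossPt d ⟨0, hd⟩ 0,
        Finset.mem_image.mpr ⟨(⟨0, hd⟩, 0), Finset.mem_univ _, rfl⟩, rfl⟩⟩
    · rintro s ⟨x, hx, rfl⟩
      obtain ⟨⟨j, k⟩, -, rfl⟩ := Finset.mem_image.mp hx
      rw [hall, h1c]
      fin_cases k
      · simp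
      · exact arccos_anti (by simpa using neg_le_self hc0)
      · simp
      · exact arccos_anti (by simpa using neg_le_self hc0)

lemma cov_eq (d : ℕ) (hd : 1 ≤ d) :
    covD distC (Finset.image (fun p : Fin d × Fin 4 => crossPt d p.1 p.2) Finset.univ) =
      Real.arccos (1 / Real.sqrt (2 * (d : ℝ))) := by
  unfold covD
  apply le_antisymm
  · apply csSup_le
    · exact ⟨_, yStar d hd, rfl⟩
    · rintro r ⟨y, rfl⟩
      exact inf_le_alpha hd y
  · exact le_csSup ⟨_, fun r hr => by obtain ⟨y, rfl⟩ := hr; exact inf_le_alpha hd y⟩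
      ⟨yStar d hd, (inf_yStar d hd).symm⟩


/-- separation distance, covering radius and mesh ratio of the
cross-polytope point set on `Ω^d`. -/
theorem crossPolytope_geometry (d : ℕ) (hd : 1 ≤ d) :
    sepD distC (Finset.image (fun p : Fin d × Fin 4 => crossPt d p.1 p.2) Finset.univ) =
        Real.pi / 2 ∧
      covD distC (Finset.image (fun p : Fin d × Fin 4 => crossPt d p.1 p.2) Finset.univ) =
        Real.arccos (1 / Real.sqrt (2 * (d : ℝ))) ∧
      meshD distC (Finset.image (fun p : Fin d × Fin 4 => crossPt d p.1 p.2) Finset.univ) =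
        (4 / Real.pi) * Real.arccos (1 / Real.sqrt (2 * (d : ℝ))) := by
  refine ⟨sep_eq d hd, cov_eq d hd, ?_⟩
  unfold meshD
  rw [sep_eq d hd, cov_eq d hd]
  have hpi : Real.pi ≠ 0 := ne_of_gt Real.pi_pos
  field_simp
  ring
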